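/- arXiv:2401.03278 — 2 statements merged into one kernel-verified Lean document; each statement's English description precedes it below -/
import Mathlib

section
/- For all sufficiently large $x$, the number of $n \leq x$ with $E(n) \geq 3 \log\log x$ is $O(x / (\log x)^{\mu})$ where $\mu = 3\log 2 - 1 > 0$. -/
private lemma factorization_lt {n p : ℕ} (hp : p ∈ n.primeFactors) :
    n.factorization p < n := by
  obtain ⟨hprime, hdvd, hn⟩ := Nat.mem_primeFactors.mp hp
  calc n.factorization p < 2 ^ n.factorization p := by first | exact Nat.lt_two_pow_self | exact Nat.lt_two_pow_self _
    _ ≤ p ^ n.factorization p := Nat.pow_le_pow_left hprime.two_le _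
    _ ≤ n := Nat.le_of_dvd (Nat.pos_of_ne_zero hn) (Nat.ordProj_dvd n p)

/-- `towerE n` is the number of edges of the prime-tower tree of `n`:
`E(1) = 0`, `E` is additive on coprime factorizations, and `E(p^ν) = E(ν) + 1`. -/
def towerE (n : ℕ) : ℕ :=
  ∑ p ∈ n.primeFactors.attach, (towerE (n.factorization p.1) + 1)
decreasing_by
  exact factorization_lt p.2

open ArithmeticFunction Finset
open scoped ArithmeticFunction.zeta

lemma towerE_eq (n : ℕ) : towerE n
    = ∑ p ∈ n.primeFactors.attach, (towerE (n.factorization p.1) + 1) := by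
  rw [towerE]

lemma two_mul_le_two_pow (m : ℕ) : 2 * m ≤ 2 ^ m := by
  induction m with
  | zero => simp
  | succ k ih =>
    rcases Nat.eq_zero_or_pos k with h | h
    · subst h; norm_num
    · have h2 : (2:ℕ) ≤ 2 ^ k := by
        calc (2:ℕ) = 2 * 1 := by ring
          _ ≤ 2 * k := by omega
          _ ≤ 2 ^ k := ih
      calc 2 * (k + 1) = 2 * k + 2 := by ring
        _ ≤ 2 ^ k + 2 ^ k := by omega
        _ = 2 ^ (k + 1) := by ring

lemma two_pow_towerE_prod (n : ℕ) :
    2 ^ towerE n = ∏ p ∈ n.primeFactors, 2 * 2 ^ towerE (n.factorization p) := by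
  rw [towerE_eq, ← Finset.prod_pow_eq_pow_sum, ← Finset.prod_attach (s := n.primeFactors)
    (f := fun p => 2 * 2 ^ towerE (n.factorization p))]
  exact Finset.prod_congr rfl fun p _ => by rw [pow_succ, mul_comm]

lemma two_pow_towerE_le (n : ℕ) (hn : 1 ≤ n) : 2 ^ towerE n ≤ n := by
  induction n using Nat.strong_induction_on with
  | _ n ih =>
    rw [two_pow_towerE_prod]
    calc ∏ p ∈ n.primeFactors, 2 * 2 ^ towerE (n.factorization p)
        ≤ ∏ p ∈ n.primeFactors, p ^ (n.factorization p) := by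
          refine Finset.prod_le_prod' fun p hp => ?_
          have hprime := Nat.prime_of_mem_primeFactors hp
          have hν : 1 ≤ n.factorization p :=
            hprime.factorization_pos_of_dvd (by omega) (Nat.dvd_of_mem_primeFactors hp)
          calc 2 * 2 ^ towerE (n.factorization p)
              ≤ 2 * n.factorization p :=
                Nat.mul_le_mul_left 2 (ih _ (factorization_lt hp) hν)
            _ ≤ 2 ^ n.factorization p := two_mul_le_two_pow _
            _ ≤ p ^ n.factorization p := Nat.pow_le_pow_left hprime.two_le _
      _ = n := by
          conv_rhs => rw [← Nat.factorization_prod_pow_eq_self (show n ≠ 0 by omega)]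
          rfl

open Classical in
/-- Indicator of (nonzero) perfect squares via factorization. -/
noncomputable def sqf : ArithmeticFunction ℕ :=
  ⟨fun n => if n ≠ 0 ∧ ∀ p, Even (n.factorization p) then 1 else 0, by simp⟩

open Classical in
lemma sqf_apply (n : ℕ) :
    sqf n = if n ≠ 0 ∧ ∀ p, Even (n.factorization p) then 1 else 0 := rfl

lemma sqf_isMultiplicative : sqf.IsMultiplicative := by
  constructor
  · simp [sqf_apply]
  · intro m n cop
    rcases Nat.eq_zero_or_pos m with hm | hm
    · subst hm
      have : n = 1 := Nat.coprime_zero_left n |>.mp cop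
      subst this; simp [sqf_apply]
    rcases Nat.eq_zero_or_pos n with hn | hn
    · subst hn
      have : m = 1 := Nat.coprime_zero_right m |>.mp cop
      subst this; simp [sqf_apply]
    have hm0 : m ≠ 0 := by omega
    have hn0 : n ≠ 0 := by omega
    have hkey : ∀ p, m.factorization p = 0 ∨ n.factorization p = 0 := by
      intro p
      by_contra hc
      push_neg at hc
      have h1 := (Nat.factorization_eq_zero_iff m p).not.mp hc.1
      have h2 := (Nat.factorization_eq_zero_iff n p).not.mp hc.2
      push_neg at h1 h2
      exact Nat.Prime.not_coprime_iff_dvd.mpr ⟨p, h1.1, h1.2.1, h2.2.1⟩ cop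
    have hfac : ∀ p, (m * n).factorization p = m.factorization p + n.factorization p := by
      intro p; rw [Nat.factorization_mul hm0 hn0]; rfl
    have hiff : (∀ p, Even ((m * n).factorization p)) ↔
        ((∀ p, Even (m.factorization p)) ∧ ∀ p, Even (n.factorization p)) := by
      constructor
      · intro h
        refine ⟨fun p => ?_, fun p => ?_⟩
        · have hh := h p; rw [hfac p] at hh
          rcases hkey p with h0 | h0
          · simp [h0]
          · simpa [h0] using hh
        · have hh := h p; rw [hfac p] at hh
          rcases hkey p with h0 | h0
          · simpa [h0] using hh
          · simp [h0]
      · intro ⟨h1, h2⟩ p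
        rw [hfac p]; exact (h1 p).add (h2 p)
    have hprod : ((m * n ≠ 0 ∧ ∀ p, Even ((m * n).factorization p)) ↔
        ((m ≠ 0 ∧ ∀ p, Even (m.factorization p)) ∧
          (n ≠ 0 ∧ ∀ p, Even (n.factorization p)))) := by
      constructor
      · intro ⟨_, h⟩
        obtain ⟨h1, h2⟩ := hiff.mp h
        exact ⟨⟨hm0, h1⟩, ⟨hn0, h2⟩⟩
      · intro ⟨⟨_, h1⟩, ⟨_, h2⟩⟩
        exact ⟨Nat.mul_ne_zero hm0 hn0, hiff.mpr ⟨h1, h2⟩⟩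
    simp only [sqf_apply]
    by_cases H : (m ≠ 0 ∧ ∀ p, Even (m.factorization p)) ∧
        (n ≠ 0 ∧ ∀ p, Even (n.factorization p))
    · rw [if_pos (hprod.mpr H), if_pos H.1, if_pos H.2, mul_one]
    · rw [if_neg (fun hc => H (hprod.mp hc))]
      rcases Classical.em (m ≠ 0 ∧ ∀ p, Even (m.factorization p)) with A | A
      · have B : ¬(n ≠ 0 ∧ ∀ p, Even (n.factorization p)) := fun B => H ⟨A, B⟩
        rw [if_pos A, if_neg B, mul_zero]
      · rw [if_neg A]
        simp

lemma sqf_prime_pow {p : ℕ} (hp : p.Prime) (j : ℕ) :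
    sqf (p ^ j) = if Even j then 1 else 0 := by
  rw [sqf_apply]
  have hne : p ^ j ≠ 0 := pow_ne_zero _ hp.pos.ne'
  have hfac : (p ^ j).factorization = Finsupp.single p j := hp.factorization_pow
  have hiff : (∀ q, Even ((p ^ j).factorization q)) ↔ Even j := by
    rw [hfac]
    constructor
    · intro h; have := h p; rwa [Finsupp.single_eq_same] at this
    · intro h q
      rcases eq_or_ne q p with rfl | hq
      · rwa [Finsupp.single_eq_same]
      · rw [Finsupp.single_eq_of_ne' (Ne.symm hq)]; exact Even.zero
  by_cases h : Even j
  · rw [if_pos h, if_pos ⟨hne, hiff.mpr h⟩]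
  · rw [if_neg h, if_neg (fun hc => h (hiff.mp hc.2))]

/-- if `sqf e ≠ 0` then `e` is a square of a positive number. -/
lemma sqf_square {e : ℕ} (h : sqf e ≠ 0) : ∃ k, 1 ≤ k ∧ e = k ^ 2 := by
  rw [sqf_apply] at h
  split_ifs at h with hc
  · obtain ⟨he, hev⟩ := hc
    refine ⟨e.factorization.prod fun p a => p ^ (a / 2), ?_, ?_⟩
    · have : e.factorization.prod (fun p a => p ^ (a / 2)) ≠ 0 := by
        rw [Finsupp.prod]
        refine Finset.prod_ne_zero_iff.mpr fun p hp => ?_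
        exact pow_ne_zero _
          (Nat.prime_of_mem_primeFactors (by rwa [Nat.support_factorization] at hp)).pos.ne'
      omega
    · conv_lhs => rw [← Nat.factorization_prod_pow_eq_self he]
      rw [Finsupp.prod, Finsupp.prod, ← Finset.prod_pow]
      refine Finset.prod_congr rfl fun p hp => ?_
      rw [← pow_mul]
      congr 1
      have := hev p
      rw [Nat.even_iff] at this
      omega
  · exact absurd rfl h

lemma sqf_le_one (n : ℕ) : sqf n ≤ 1 := by
  rw [sqf_apply]; split_ifs <;> omega

noncomputable def Uf : ArithmeticFunction ℕ := ζ * sqf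
noncomputable def Tf : ArithmeticFunction ℕ := ζ * Uf

lemma Tf_isMultiplicative : Tf.IsMultiplicative :=
  isMultiplicative_zeta.mul (isMultiplicative_zeta.mul sqf_isMultiplicative)

lemma Uf_apply (d : ℕ) : Uf d = ∑ e ∈ d.divisors, sqf e := zeta_mul_apply

lemma Tf_apply (n : ℕ) : Tf n = ∑ d ∈ n.divisors, Uf d := zeta_mul_apply

lemma Uf_prime_pow {p : ℕ} (hp : p.Prime) (j : ℕ) : Uf (p ^ j) = j / 2 + 1 := by
  rw [Uf_apply, Nat.sum_divisors_prime_pow hp]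
  induction j with
  | zero => rw [Finset.sum_range_one, pow_zero]; simpa using sqf_prime_pow hp 0
  | succ k ih =>
    rw [Finset.sum_range_succ, ih, sqf_prime_pow hp]
    rcases Nat.even_or_odd (k + 1) with h | h
    · rw [if_pos h]
      rw [Nat.even_iff] at h; omega
    · rw [if_neg (Nat.not_even_iff_odd.mpr h)]
      rw [Nat.odd_iff] at h; omega

lemma Tf_prime_pow_ge {p : ℕ} (hp : p.Prime) {ν : ℕ} (hν : 1 ≤ ν) : 2 * ν ≤ Tf (p ^ ν) := by
  rw [Tf_apply, Nat.sum_divisors_prime_pow hp]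
  have hU : ∀ j, Uf (p ^ j) = j / 2 + 1 := Uf_prime_pow hp
  simp only [hU]
  clear hU
  induction ν with
  | zero => omega
  | succ k ih =>
    rcases Nat.eq_zero_or_pos k with hk | hk
    · subst hk; simp [Finset.sum_range_succ]
    · rw [Finset.sum_range_succ]
      have := ih hk
      omega

lemma two_pow_towerE_le_Tf (n : ℕ) (hn : 1 ≤ n) : 2 ^ towerE n ≤ Tf n := by
  rw [two_pow_towerE_prod,
    Tf_isMultiplicative.multiplicative_factorization Tf (show n ≠ 0 by omega),
    Finsupp.prod]
  rw [Nat.support_factorization]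
  refine Finset.prod_le_prod' fun p hp => ?_
  have hprime := Nat.prime_of_mem_primeFactors hp
  have hν : 1 ≤ n.factorization p :=
    hprime.factorization_pos_of_dvd (by omega) (Nat.dvd_of_mem_primeFactors hp)
  calc 2 * 2 ^ towerE (n.factorization p)
      ≤ 2 * n.factorization p := by
        have h2 : 2 ^ towerE (n.factorization p) ≤ n.factorization p :=
          two_pow_towerE_le _ hν
        omega
    _ ≤ Tf (p ^ n.factorization p) := Tf_prime_pow_ge hprime hν

lemma divisors_eq_filter {n x : ℕ} (h1 : 1 ≤ n) (h2 : n ≤ x) :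
    n.divisors = (Icc 1 x).filter (· ∣ n) := by
  ext d
  simp only [Nat.mem_divisors, mem_filter, mem_Icc]
  constructor
  · rintro ⟨hd, -⟩
    exact ⟨⟨Nat.pos_of_dvd_of_pos hd h1, le_trans (Nat.le_of_dvd h1 hd) h2⟩, hd⟩
  · rintro ⟨-, hd⟩
    exact ⟨hd, by omega⟩

lemma sum_divisors_swap (x : ℕ) (g : ℕ → ℕ → ℝ) :
    ∑ n ∈ Icc 1 x, ∑ d ∈ n.divisors, g n d
      = ∑ d ∈ Icc 1 x, ∑ n ∈ (Icc 1 x).filter (d ∣ ·), g n d := by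
  have h1 : ∀ n ∈ Icc 1 x, ∑ d ∈ n.divisors, g n d
      = ∑ d ∈ Icc 1 x, if d ∣ n then g n d else 0 := by
    intro n hn
    rw [mem_Icc] at hn
    rw [divisors_eq_filter hn.1 hn.2, Finset.sum_filter]
  rw [Finset.sum_congr rfl h1, Finset.sum_comm]
  refine Finset.sum_congr rfl fun d _ => ?_
  rw [Finset.sum_filter]

lemma card_multiples (x d : ℕ) : ((Icc 1 x).filter (d ∣ ·)).card = x / d := by
  have : Icc 1 x = Ioc 0 x := by ext a; simp [Nat.lt_iff_add_one_le]
  rw [this, Nat.Ioc_filter_dvd_card_eq_div]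

lemma sum_inv_multiples_le (x e : ℕ) (he : 1 ≤ e) (hx : 1 ≤ x) :
    ∑ n ∈ (Icc 1 x).filter (e ∣ ·), (1 / n : ℝ)
      ≤ (1 / e) * (1 + Real.log x) := by
  have he0 : 0 < e := he
  have himg : (Icc 1 x).filter (e ∣ ·) = (Icc 1 (x / e)).image (e * ·) := by
    ext n
    simp only [mem_filter, mem_Icc, mem_image]
    constructor
    · rintro ⟨⟨hn1, hn2⟩, m, rfl⟩
      have hm1 : 1 ≤ m := by
        rcases Nat.eq_zero_or_pos m with h | h
        · subst h; simp at hn1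
        · exact h
      have hm2 : m ≤ x / e := (Nat.le_div_iff_mul_le he0).mpr (by rwa [mul_comm])
      exact ⟨m, ⟨hm1, hm2⟩, rfl⟩
    · rintro ⟨m, ⟨hm1, hm2⟩, rfl⟩
      have hle : m * e ≤ x := (Nat.le_div_iff_mul_le he0).mp hm2
      exact ⟨⟨Nat.mul_pos he0 hm1, by rwa [mul_comm]⟩, Dvd.intro m rfl⟩
  rw [himg, Finset.sum_image (fun a _ b _ h => Nat.eq_of_mul_eq_mul_left he0 h)]
  have hsum : ∑ m ∈ Icc 1 (x / e), (1 / (e * m : ℕ) : ℝ)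
      = (1 / e) * ∑ m ∈ Icc 1 (x / e), (1 / m : ℝ) := by
    rw [Finset.mul_sum]
    refine Finset.sum_congr rfl fun m _ => ?_
    push_cast
    rw [one_div, one_div, one_div, mul_inv]
  rw [hsum]
  have hharm : ∑ m ∈ Icc 1 (x / e), (1 / m : ℝ) ≤ 1 + Real.log x := by
    have h1 : ∑ m ∈ Icc 1 (x / e), (1 / m : ℝ) = ((harmonic (x / e) : ℚ) : ℝ) := by
      rw [harmonic_eq_sum_Icc]
      push_cast
      simp [one_div]
    have h2 : ((harmonic (x / e) : ℚ) : ℝ) ≤ 1 + Real.log (x / e : ℕ) := by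
      exact_mod_cast harmonic_le_one_add_log (x / e)
    have h3 : Real.log ((x / e : ℕ) : ℝ) ≤ Real.log x := by
      rcases Nat.eq_zero_or_pos (x / e) with h | h
      · rw [h]; simpa using Real.log_natCast_nonneg x
      · exact Real.log_le_log (by exact_mod_cast h) (by exact_mod_cast Nat.div_le_self x e)
    linarith
  have he' : (0:ℝ) ≤ 1 / e := by positivity
  exact mul_le_mul_of_nonneg_left hharm he'

lemma sum_inv_sq_le : ∀ K : ℕ, 1 ≤ K → ∑ k ∈ Icc 1 K, (1 / (k:ℝ)^2) ≤ 2 - 1 / (K:ℝ) := by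
  intro K
  induction K with
  | zero => omega
  | succ m ih =>
    intro _
    rcases Nat.eq_zero_or_pos m with hm | hm
    · subst hm; norm_num
    · rw [Finset.sum_Icc_succ_top (by omega)]
      have h1 := ih hm
      have hm' : (1:ℝ) ≤ m := by exact_mod_cast hm
      have key : (1 / ((m:ℝ)+1)^2) ≤ 1 / m - 1 / (m+1) := by
        rw [div_sub_div _ _ (by positivity) (by positivity)]
        rw [div_le_div_iff₀ (by positivity) (by positivity)]
        ring_nf
        nlinarith
      push_cast
      nlinarith [h1, key]


lemma sqf_weighted_sum_le (x : ℕ) : ∑ e ∈ Icc 1 x, (sqf e : ℝ) * (1/e) ≤ 2 := by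
  classical
  set S := (Icc 1 x).image (fun k => k^2) with hS
  have hpt : ∀ e ∈ Icc 1 x, (sqf e : ℝ) * (1/e) ≤ if e ∈ S then (1/e : ℝ) else 0 := by
    intro e he
    rw [mem_Icc] at he
    rcases eq_or_ne (sqf e) 0 with h | h
    · rw [h]
      simp only [Nat.cast_zero, zero_mul]
      split_ifs <;> positivity
    · obtain ⟨k, hk1, rfl⟩ := sqf_square h
      have hkx : k ≤ x := le_trans (Nat.le_self_pow two_ne_zero k) he.2
      have hmem : k^2 ∈ S := Finset.mem_image.mpr ⟨k, mem_Icc.mpr ⟨hk1, hkx⟩, rfl⟩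
      rw [if_pos hmem]
      have h1 : (sqf (k^2) : ℝ) ≤ 1 := by exact_mod_cast sqf_le_one (k^2)
      have h2 : (0:ℝ) ≤ 1 / ((k^2 : ℕ):ℝ) := by positivity
      nlinarith
  calc ∑ e ∈ Icc 1 x, (sqf e : ℝ) * (1/e)
      ≤ ∑ e ∈ Icc 1 x, (if e ∈ S then (1/e : ℝ) else 0) := Finset.sum_le_sum hpt
    _ = ∑ e ∈ (Icc 1 x).filter (· ∈ S), (1/e : ℝ) := by rw [Finset.sum_filter]
    _ ≤ ∑ e ∈ S, (1/e : ℝ) := by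
        refine Finset.sum_le_sum_of_subset_of_nonneg ?_ (fun e _ _ => by positivity)
        intro e he
        exact (Finset.mem_filter.mp he).2
    _ = ∑ k ∈ Icc 1 x, (1 / ((k^2:ℕ):ℝ)) := by
        rw [hS, Finset.sum_image]
        intro a _ b _ hab
        exact Nat.pow_left_injective two_ne_zero hab
    _ ≤ 2 := by
        rcases Nat.eq_zero_or_pos x with h | h
        · subst h; simp
        · have := sum_inv_sq_le x h
          have h2 : (0:ℝ) < x := by exact_mod_cast h
          have heq : ∑ k ∈ Icc 1 x, (1 / ((k^2:ℕ):ℝ)) = ∑ k ∈ Icc 1 x, (1 / (k:ℝ)^2) := by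
            refine Finset.sum_congr rfl fun k _ => by push_cast; ring
          rw [heq]
          have : (0:ℝ) < 1 / x := by positivity
          linarith

lemma sum_Tf_le (x : ℕ) (hx : 1 ≤ x) :
    ∑ n ∈ Icc 1 x, (Tf n : ℝ) ≤ (x : ℝ) * (2 * (1 + Real.log x)) := by
  have hlog : (0:ℝ) ≤ Real.log x := Real.log_natCast_nonneg x
  have h1 : ∑ n ∈ Icc 1 x, (Tf n : ℝ)
      = ∑ d ∈ Icc 1 x, ((x / d : ℕ) : ℝ) * (Uf d : ℝ) := by
    calc ∑ n ∈ Icc 1 x, (Tf n : ℝ)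
        = ∑ n ∈ Icc 1 x, ∑ d ∈ n.divisors, (Uf d : ℝ) := by
          refine Finset.sum_congr rfl fun n _ => ?_
          rw [Tf_apply]; push_cast; rfl
      _ = ∑ d ∈ Icc 1 x, ∑ n ∈ (Icc 1 x).filter (d ∣ ·), (Uf d : ℝ) :=
          sum_divisors_swap x fun n d => (Uf d : ℝ)
      _ = ∑ d ∈ Icc 1 x, ((x / d : ℕ) : ℝ) * (Uf d : ℝ) := by
          refine Finset.sum_congr rfl fun d _ => ?_
          rw [Finset.sum_const, card_multiples, nsmul_eq_mul]
  have h2 : ∑ d ∈ Icc 1 x, ((x / d : ℕ) : ℝ) * (Uf d : ℝ)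
      ≤ (x:ℝ) * ∑ d ∈ Icc 1 x, (Uf d : ℝ) * (1 / d) := by
    rw [Finset.mul_sum]
    refine Finset.sum_le_sum fun d hd => ?_
    have hd1 : 1 ≤ d := (mem_Icc.mp hd).1
    have hcast : ((x / d : ℕ) : ℝ) ≤ (x:ℝ) / d := Nat.cast_div_le
    have hd0 : (0:ℝ) < d := by exact_mod_cast hd1
    have hU : (0:ℝ) ≤ (Uf d : ℝ) := by positivity
    calc ((x / d : ℕ) : ℝ) * (Uf d : ℝ) ≤ ((x:ℝ) / d) * (Uf d : ℝ) :=
          mul_le_mul_of_nonneg_right hcast hU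
      _ = (x:ℝ) * ((Uf d : ℝ) * (1 / d)) := by ring
  have h3 : ∑ d ∈ Icc 1 x, (Uf d : ℝ) * (1 / d) ≤ 2 * (1 + Real.log x) := by
    have e1 : ∑ d ∈ Icc 1 x, (Uf d : ℝ) * (1 / d)
        = ∑ d ∈ Icc 1 x, ∑ e ∈ d.divisors, (sqf e : ℝ) * (1 / d) := by
      refine Finset.sum_congr rfl fun d _ => ?_
      rw [Uf_apply]
      push_cast
      rw [Finset.sum_mul]
    rw [e1, sum_divisors_swap x fun d e => (sqf e : ℝ) * (1 / d)]
    have e2 : ∀ e ∈ Icc 1 x,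
        ∑ d ∈ (Icc 1 x).filter (e ∣ ·), (sqf e : ℝ) * (1 / d)
          ≤ (sqf e : ℝ) * ((1 / e) * (1 + Real.log x)) := by
      intro e he
      rw [← Finset.mul_sum]
      have hsq : (0:ℝ) ≤ (sqf e : ℝ) := by positivity
      exact mul_le_mul_of_nonneg_left
        (sum_inv_multiples_le x e (mem_Icc.mp he).1 hx) hsq
    calc ∑ e ∈ Icc 1 x, ∑ d ∈ (Icc 1 x).filter (e ∣ ·), (sqf e : ℝ) * (1 / d)
        ≤ ∑ e ∈ Icc 1 x, (sqf e : ℝ) * ((1 / e) * (1 + Real.log x)) :=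
          Finset.sum_le_sum e2
      _ = (1 + Real.log x) * ∑ e ∈ Icc 1 x, (sqf e : ℝ) * (1 / e) := by
          rw [Finset.mul_sum]; exact Finset.sum_congr rfl fun e _ => by ring
      _ ≤ (1 + Real.log x) * 2 :=
          mul_le_mul_of_nonneg_left (sqf_weighted_sum_le x) (by linarith)
      _ = 2 * (1 + Real.log x) := by ring
  calc ∑ n ∈ Icc 1 x, (Tf n : ℝ) ≤ (x:ℝ) * ∑ d ∈ Icc 1 x, (Uf d : ℝ) * (1 / d) := by
        rw [h1]; exact h2
    _ ≤ (x:ℝ) * (2 * (1 + Real.log x)) := by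
        have : (0:ℝ) ≤ x := by positivity
        exact mul_le_mul_of_nonneg_left h3 this

open scoped Classical in
/-- For sufficiently large `x`, `#{n ≤ x : E(n) ≥ 3 log log x} = O(x / (log x)^μ)`,
where `μ = 3 log 2 - 1`. -/
theorem stmt_7 : ∃ C : ℝ, ∃ x₀ : ℕ, ∀ x : ℕ, x₀ ≤ x →
    (((Finset.Icc 1 x).filter
        (fun n => 3 * Real.log (Real.log x) ≤ (towerE n : ℝ))).card : ℝ) ≤
      C * x / Real.log x ^ ((3 : ℝ) * Real.log 2 - 1) := by
  refine ⟨4, 3, fun x hx => ?_⟩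
  have hx1 : 1 ≤ x := by omega
  set L : ℝ := Real.log x with hLdef
  have hL1 : 1 ≤ L := by
    have he : Real.exp 1 ≤ 3 := le_of_lt (lt_trans Real.exp_one_lt_d9 (by norm_num))
    have h3 : (1:ℝ) ≤ Real.log 3 := (Real.le_log_iff_exp_le (by norm_num)).mpr he
    have h4 : Real.log 3 ≤ L := by
      rw [hLdef]
      exact Real.log_le_log (by norm_num) (by exact_mod_cast hx)
    linarith
  have hL0 : (0:ℝ) < L := by linarith
  set A := (Finset.Icc 1 x).filter
    (fun n => 3 * Real.log (Real.log x) ≤ (towerE n : ℝ)) with hA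
  set c : ℝ := L ^ ((3:ℝ) * Real.log 2) with hc
  have hcle : ∀ n ∈ A, c ≤ ((2 ^ towerE n : ℕ) : ℝ) := by
    intro n hn
    obtain ⟨hmem, hcond⟩ := Finset.mem_filter.mp hn
    have hceq : c = (2:ℝ) ^ (3 * Real.log L) := by
      rw [hc, Real.rpow_def_of_pos hL0, Real.rpow_def_of_pos two_pos]
      ring_nf
    rw [hceq]
    calc (2:ℝ) ^ (3 * Real.log L) ≤ (2:ℝ) ^ ((towerE n : ℕ) : ℝ) :=
          Real.rpow_le_rpow_of_exponent_le one_le_two hcond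
      _ = ((2 ^ towerE n : ℕ) : ℝ) := by
          rw [Real.rpow_natCast]; push_cast; ring
  have hcard : (A.card : ℝ) * c ≤ ∑ n ∈ A, ((2 ^ towerE n : ℕ) : ℝ) := by
    have := Finset.card_nsmul_le_sum A (fun n => ((2 ^ towerE n : ℕ) : ℝ)) c hcle
    rwa [nsmul_eq_mul] at this
  have hsub : ∑ n ∈ A, ((2 ^ towerE n : ℕ) : ℝ)
      ≤ ∑ n ∈ Icc 1 x, ((2 ^ towerE n : ℕ) : ℝ) := by
    refine Finset.sum_le_sum_of_subset_of_nonneg (Finset.filter_subset _ _)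
      fun n _ _ => by positivity
  have hTf : ∑ n ∈ Icc 1 x, ((2 ^ towerE n : ℕ) : ℝ) ≤ ∑ n ∈ Icc 1 x, (Tf n : ℝ) := by
    refine Finset.sum_le_sum fun n hn => ?_
    exact_mod_cast two_pow_towerE_le_Tf n (mem_Icc.mp hn).1
  have hfinal : (A.card : ℝ) * c ≤ (x:ℝ) * (4 * L) := by
    have h0 := sum_Tf_le x hx1
    have : (x:ℝ) * (2 * (1 + L)) ≤ (x:ℝ) * (4 * L) := by
      have hx0 : (0:ℝ) ≤ x := by positivity
      nlinarith
    linarith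
  have hc2 : c = L ^ ((3:ℝ) * Real.log 2 - 1) * L := by
    calc c = L ^ (((3:ℝ) * Real.log 2 - 1) + 1) := by rw [hc]; congr 1; ring
      _ = L ^ ((3:ℝ) * Real.log 2 - 1) * L := by rw [Real.rpow_add hL0, Real.rpow_one]
  have hμpos : (0:ℝ) < L ^ ((3:ℝ) * Real.log 2 - 1) := Real.rpow_pos_of_pos hL0 _
  have h5 : (A.card : ℝ) * L ^ ((3:ℝ) * Real.log 2 - 1) ≤ 4 * x := by
    have h6 : (A.card:ℝ) * L ^ ((3:ℝ) * Real.log 2 - 1) * L ≤ 4 * x * L := by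
      calc (A.card:ℝ) * L ^ ((3:ℝ) * Real.log 2 - 1) * L = (A.card:ℝ) * c := by
            rw [hc2]; ring
        _ ≤ (x:ℝ) * (4 * L) := hfinal
        _ = 4 * x * L := by ring
    exact le_of_mul_le_mul_right h6 hL0
  calc (A.card : ℝ) ≤ 4 * x / L ^ ((3:ℝ) * Real.log 2 - 1) :=
        (le_div_iff₀ hμpos).mpr h5
    _ = 4 * x / Real.log x ^ ((3:ℝ) * Real.log 2 - 1) := by rw [hLdef]
end

section
/- If $t(n+1) = t(n+2) = \cdots = t(n+k)$ as planar rooted trees for some positive integers $n$ and $k$, then $k \leq 3$. -/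
inductive PTree : Type
  | node : List PTree → PTree

def primeTower (n : ℕ) : PTree :=
  PTree.node (((n.primeFactors.sort (· ≤ ·)).attach).map
    (fun p => primeTower (n.factorization p.1)))
decreasing_by
  exact factorization_lt ((Finset.mem_sort _).mp p.2)

lemma primeTower_def (n : ℕ) : primeTower n =
    PTree.node (((n.primeFactors.sort (· ≤ ·)).attach).map
      (fun p => primeTower (n.factorization p.1))) := by
  rw [primeTower]

lemma primeTower_one_ne {v : ℕ} (hv : 2 ≤ v) : primeTower 1 ≠ primeTower v := by
  rw [primeTower_def, primeTower_def]
  intro h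
  injection h with h
  have hlen := congrArg List.length h
  simp only [List.length_map, List.length_attach, Finset.length_sort,
    Nat.primeFactors_one, Finset.card_empty] at hlen
  rcases Nat.exists_prime_and_dvd (by omega : v ≠ 1) with ⟨p, hp, hd⟩
  have : 0 < v.primeFactors.card :=
    Finset.card_pos.mpr ⟨p, Nat.mem_primeFactors.mpr ⟨hp, hd, by omega⟩⟩
  omega

lemma sub2 {x : ℕ} (hx : x ≠ 0) (h2 : 2 ∣ x) :
    ∃ l, primeTower x = PTree.node (primeTower (x.factorization 2) :: l) := by
  have hmem : 2 ∈ x.primeFactors := Nat.mem_primeFactors.mpr ⟨Nat.prime_two, h2, hx⟩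
  have hlen : 0 < (x.primeFactors.sort (· ≤ ·)).length := by
    rw [Finset.length_sort]; exact Finset.card_pos.mpr ⟨2, hmem⟩
  have hmin : x.primeFactors.min' ⟨2, hmem⟩ = 2 := by
    refine le_antisymm (Finset.min'_le _ _ hmem) ?_
    exact Finset.le_min' _ _ _ fun y hy => (Nat.prime_of_mem_primeFactors hy).two_le
  have h0 : (x.primeFactors.sort (· ≤ ·))[0] = 2 := by
    rw [Finset.sorted_zero_eq_min', hmin]
  set M := ((x.primeFactors.sort (· ≤ ·)).attach).map
    (fun p => primeTower (x.factorization p.1)) with hM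
  have hMlen : 0 < M.length := by simpa [hM] using hlen
  have hM0 : M[0] = primeTower (x.factorization 2) := by
    simp only [hM, List.getElem_map, List.getElem_attach, h0]
  refine ⟨M.tail, ?_⟩
  rw [primeTower_def, ← hM0, ← hM, List.getElem_zero, List.cons_head_tail]

lemma key {x y : ℕ} (hx0 : x ≠ 0) (hx : 4 ∣ x) (hy : y % 4 = 2)
    (hxy : primeTower x = primeTower y) : False := by
  have hy0 : y ≠ 0 := by omega
  obtain ⟨l, hl⟩ := sub2 hx0 (dvd_trans (by norm_num) hx)
  obtain ⟨l', hl'⟩ := sub2 hy0 (by omega)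
  rw [hl, hl'] at hxy
  injection hxy with hxy
  have hsub : primeTower (x.factorization 2) = primeTower (y.factorization 2) :=
    (List.cons.injEq _ _ _ _ ▸ hxy).1
  have hxf : 2 ≤ x.factorization 2 :=
    (Nat.Prime.pow_dvd_iff_le_factorization Nat.prime_two hx0).mp (by norm_num; exact hx)
  have hyf : y.factorization 2 = 1 := by
    have h1 : 1 ≤ y.factorization 2 :=
      (Nat.Prime.pow_dvd_iff_le_factorization Nat.prime_two hy0).mp (by norm_num; omega)
    have h2 : ¬ 2 ≤ y.factorization 2 := fun hc => by
      have := (Nat.Prime.pow_dvd_iff_le_factorization Nat.prime_two hy0).mpr hc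
      norm_num at this
      omega
    omega
  rw [hyf] at hsub
  exact primeTower_one_ne hxf hsub.symm

/-- If `t(n+1) = t(n+2) = ⋯ = t(n+k)` as planar rooted trees, then `k ≤ 3`. -/
theorem stmt_11 (n k : ℕ) (hn : 1 ≤ n) (hk : 1 ≤ k)
    (h : ∀ i, 1 ≤ i → i ≤ k → primeTower (n + i) = primeTower (n + 1)) :
    k ≤ 3 := by
  by_contra hk3
  have hk4 : 4 ≤ k := by omega
  have H : ∀ i, 1 ≤ i → i ≤ 4 → primeTower (n + i) = primeTower (n + 1) :=
    fun i h1 h4 => h i h1 (le_trans h4 hk4)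
  have hex : ∃ i j, 1 ≤ i ∧ i ≤ 4 ∧ 1 ≤ j ∧ j ≤ 4 ∧ 4 ∣ (n + i) ∧ (n + j) % 4 = 2 := by
    have h4 : n % 4 = 0 ∨ n % 4 = 1 ∨ n % 4 = 2 ∨ n % 4 = 3 := by omega
    rcases h4 with h4 | h4 | h4 | h4
    · exact ⟨4, 2, by omega, by omega, by omega, by omega, by omega, by omega⟩
    · exact ⟨3, 1, by omega, by omega, by omega, by omega, by omega, by omega⟩
    · exact ⟨2, 4, by omega, by omega, by omega, by omega, by omega, by omega⟩
    · exact ⟨1, 3, by omega, by omega, by omega, by omega, by omega, by omega⟩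
  obtain ⟨i, j, hi1, hi4, hj1, hj4, hdvd, hmod⟩ := hex
  exact key (by omega) hdvd hmod ((H i hi1 hi4).trans (H j hj1 hj4).symm)
end
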